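/- arXiv:1204.0530 — 3 statements merged into one kernel-verified Lean document; each statement's English description precedes it below -/
import Mathlib

section
/- Let X be a nonempty proper geodesic metric space and let the group G act on X by isometries. Suppose the action is properly discontinuous (for every compact set K ⊆ X, the set {g ∈ G : (g • K) ∩ K ≠ ∅} is finite) and cocompact (there is a compact set K ⊆ X with ⋃_{g ∈ G} g • K = X). Then G is finitely generated. -/
open Pointwise

/-- **Švarc–Milnor lemma, finite generation part.**
If a group `G` acts by isometries on a nonempty proper geodesic metric space `X`,
properly discontinuously and cocompactly, then `G` is finitely generated. -/
theorem svarc_milnor_fg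
    {G : Type*} [Group G] {X : Type*} [MetricSpace X] [Nonempty X] [ProperSpace X]
    [MulAction G X]
    -- `X` is geodesic
    (hgeo : ∀ x y : X, ∃ γ : ℝ → X, γ 0 = x ∧ γ (dist x y) = y ∧
      ∀ s ∈ Set.Icc (0 : ℝ) (dist x y), ∀ t ∈ Set.Icc (0 : ℝ) (dist x y),
        dist (γ s) (γ t) = |s - t|)
    -- the action is by isometries
    (hiso : ∀ (g : G) (x y : X), dist (g • x) (g • y) = dist x y)
    -- the action is properly discontinuous
    (hpd : ∀ K : Set X, IsCompact K → {g : G | (g • K ∩ K).Nonempty}.Finite)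
    -- the action is cocompact
    (hcc : ∃ K : Set X, IsCompact K ∧ ⋃ g : G, g • K = Set.univ) :
    Group.FG G := by
  obtain ⟨K, hKcpt, hKcov⟩ := hcc
  obtain ⟨x₀⟩ := ‹Nonempty X›
  -- basepoint in K
  obtain ⟨g₀, hg₀⟩ : ∃ g : G, x₀ ∈ g • K := by
    have : x₀ ∈ ⋃ g : G, g • K := hKcov ▸ Set.mem_univ x₀
    simpa using this
  set y₀ : X := g₀⁻¹ • x₀ with hy₀def
  have hy₀K : y₀ ∈ K := by
    rwa [Set.mem_smul_set_iff_inv_smul_mem] at hg₀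
  -- radius bound for K
  obtain ⟨R₀, hR₀⟩ := hKcpt.isBounded.subset_closedBall y₀
  set R : ℝ := max R₀ 0 with hRdef
  have hR : 0 ≤ R := le_max_right _ _
  have hKball : K ⊆ Metric.closedBall y₀ R :=
    hR₀.trans (Metric.closedBall_subset_closedBall (le_max_left _ _))
  -- key estimate: points of h • K are within R of h • y₀
  have hclose : ∀ (h : G) (p : X), p ∈ h • K → dist p (h • y₀) ≤ R := by
    intro h p hp
    rw [Set.mem_smul_set_iff_inv_smul_mem] at hp
    have h1 : dist (h⁻¹ • p) y₀ ≤ R := hKball hp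
    have h2 : dist (h⁻¹ • p) (h⁻¹ • (h • y₀)) = dist p (h • y₀) := hiso h⁻¹ p (h • y₀)
    rw [inv_smul_smul] at h2
    linarith [h2 ▸ h1]
  -- the generating set
  set B : Set X := Metric.closedBall y₀ (2 * R + 2) with hBdef
  set S : Set G := {g : G | ((g • B) ∩ B).Nonempty} with hSdef
  have hSfin : S.Finite := hpd B (ProperSpace.isCompact_closedBall y₀ _)
  have hy₀B : y₀ ∈ B := by
    simp only [hBdef, Metric.mem_closedBall, dist_self]
    linarith
  have hSmem : ∀ g : G, dist y₀ (g • y₀) ≤ 2 * R + 2 → g ∈ S := by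
    intro g hg
    exact ⟨g • y₀, Set.smul_mem_smul_set hy₀B, by
      simpa [hBdef, Metric.mem_closedBall, dist_comm] using hg⟩
  -- distance of translates
  have hdist_mul : ∀ h g : G, dist y₀ ((h⁻¹ * g) • y₀) = dist (h • y₀) (g • y₀) := by
    intro h g
    have key : h • ((h⁻¹ * g) • y₀) = g • y₀ := by
      rw [smul_smul, mul_inv_cancel_left]
    have h2 := hiso h y₀ ((h⁻¹ * g) • y₀)
    rw [key] at h2
    exact h2.symm
  -- main induction
  have main : ∀ n : ℕ, ∀ g : G, dist y₀ (g • y₀) ≤ R + 1 + n → g ∈ Subgroup.closure S := by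
    intro n
    induction n with
    | zero =>
        intro g hg
        exact Subgroup.subset_closure (hSmem g (by push_cast at hg; linarith))
    | succ n ih =>
        intro g hg
        by_cases hle : dist y₀ (g • y₀) ≤ R + 1 + n
        · exact ih g hle
        push_neg at hle
        set L : ℝ := dist y₀ (g • y₀) with hL
        obtain ⟨γ, hγ0, hγL, hγd⟩ := hgeo y₀ (g • y₀)
        set t : ℝ := L - (R + 1) with ht
        have hn0 : (0 : ℝ) ≤ n := Nat.cast_nonneg n
        have ht0 : 0 ≤ t := by simp only [ht]; linarith
        have htL : t ≤ L := by simp only [ht]; linarith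
        have hLnn : 0 ≤ L := dist_nonneg
        set p : X := γ t with hp
        have dp0 : dist y₀ p = t := by
          have := hγd 0 ⟨le_refl 0, hLnn⟩ t ⟨ht0, htL⟩
          rw [hγ0] at this
          rw [this]
          rw [abs_of_nonpos (by linarith)]; ring
        have dpg : dist p (g • y₀) = R + 1 := by
          have := hγd t ⟨ht0, htL⟩ L ⟨hLnn, le_refl L⟩
          rw [hγL] at this
          rw [this, abs_of_nonpos (by simp only [ht]; linarith)]
          simp only [ht]; ring
        obtain ⟨h, hph⟩ : ∃ h : G, p ∈ h • K := by
          have : p ∈ ⋃ g : G, g • K := hKcov ▸ Set.mem_univ p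
          simpa using this
        have hpR : dist p (h • y₀) ≤ R := hclose h p hph
        have hh : h ∈ Subgroup.closure S := by
          apply ih h
          have := dist_triangle y₀ p (h • y₀)
          have hgn : L ≤ R + 1 + (n + 1) := by push_cast at hg; exact hg
          calc dist y₀ (h • y₀) ≤ dist y₀ p + dist p (h • y₀) := this
            _ ≤ t + R := by linarith
            _ ≤ R + 1 + n := by simp only [ht]; linarith
        have hs : h⁻¹ * g ∈ S := by
          apply hSmem
          rw [hdist_mul]
          calc dist (h • y₀) (g • y₀) ≤ dist (h • y₀) p + dist p (g • y₀) :=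
                dist_triangle _ _ _
            _ ≤ R + (R + 1) := by rw [dist_comm (h • y₀) p]; linarith
            _ ≤ 2 * R + 2 := by linarith
        have : g = h * (h⁻¹ * g) := by group
        rw [this]
        exact mul_mem hh (Subgroup.subset_closure hs)
  -- conclude
  rw [Group.fg_iff]
  refine ⟨S, ?_, hSfin⟩
  rw [eq_top_iff]
  intro g _
  apply main ⌈dist y₀ (g • y₀)⌉₊ g
  have h1 : dist y₀ (g • y₀) ≤ ⌈dist y₀ (g • y₀)⌉₊ := Nat.le_ceil _
  linarith
end

section
/- Let X be a nonempty proper geodesic metric space and let the group G act on X by isometries, properly discontinuously (for every compact set K ⊆ X, the set {g ∈ G : (g • K) ∩ K ≠ ∅} is finite) and cocompactly (there is a compact set K ⊆ X with ⋃_{g ∈ G} g • K = X). Let S be a finite generating set of G and let ℓ_S : G → ℕ be the associated word length, i.e. ℓ_S(g) is the least n such that g is a product of n elements of S ∪ S⁻¹ (with ℓ_S(1) = 0). Then for every x₀ ∈ X there is a constant L ≥ 1 such that: (i) for all g, h ∈ G, (1/L)·d(g • x₀, h • x₀) − L ≤ ℓ_S(g⁻¹h) ≤ L·d(g • x₀,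 h • x₀) + L; and (ii) every point of X lies within distance L of the orbit {g • x₀ : g ∈ G}. In other words, the orbit map g ↦ g • x₀ is a quasi-isometry from G (with the word metric of S) to X. -/
open Pointwise

/-- The word length of `g` with respect to a generating set `S`: the least `n`
such that `g` is a product of `n` elements of `S ∪ S⁻¹`. -/
noncomputable def wordLength {G : Type*} [Group G] (S : Finset G) (g : G) : ℕ :=
  sInf {n : ℕ | ∃ l : List G, l.length = n ∧ (∀ a ∈ l, a ∈ S ∨ a⁻¹ ∈ S) ∧ l.prod = g}

lemma wordLength_spec {G : Type*} [Group G] (S : Finset G)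
    (hS : Subgroup.closure (S : Set G) = ⊤) (g : G) :
    ∃ l : List G, l.length = wordLength S g ∧ (∀ a ∈ l, a ∈ S ∨ a⁻¹ ∈ S) ∧ l.prod = g := by
  have hne : {n : ℕ | ∃ l : List G, l.length = n ∧ (∀ a ∈ l, a ∈ S ∨ a⁻¹ ∈ S) ∧ l.prod = g}.Nonempty := by
    have hg : g ∈ Subgroup.closure (S : Set G) := hS ▸ Subgroup.mem_top g
    have : ∃ l : List G, (∀ a ∈ l, a ∈ S ∨ a⁻¹ ∈ S) ∧ l.prod = g := by
      induction hg using Subgroup.closure_induction with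
      | mem x hx => exact ⟨[x], by simpa using Or.inl hx⟩
      | one => exact ⟨[], by simp⟩
      | mul x y hx hy ihx ihy =>
        obtain ⟨l1, h1, p1⟩ := ihx; obtain ⟨l2, h2, p2⟩ := ihy
        refine ⟨l1 ++ l2, ?_, by simp [p1, p2]⟩
        intro a ha; rcases List.mem_append.mp ha with h | h
        · exact h1 a h
        · exact h2 a h
      | inv x hx ih =>
        obtain ⟨l, hl, pl⟩ := ih
        refine ⟨(l.map (·⁻¹)).reverse, ?_, ?_⟩
        · intro a ha
          simp only [List.mem_reverse, List.mem_map] at ha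
          obtain ⟨b, hb, rfl⟩ := ha
          rcases hl b hb with h | h
          · exact Or.inr (by simpa using h)
          · exact Or.inl h
        · rw [← List.prod_inv_reverse, pl]
    obtain ⟨l, hl, pl⟩ := this
    exact ⟨l.length, l, rfl, hl, pl⟩
  exact Nat.sInf_mem hne

lemma wordLength_le {G : Type*} [Group G] (S : Finset G) (l : List G)
    (hl : ∀ a ∈ l, a ∈ S ∨ a⁻¹ ∈ S) : wordLength S l.prod ≤ l.length :=
  Nat.sInf_le ⟨l, rfl, hl, rfl⟩

lemma wordLength_mul_le {G : Type*} [Group G] (S : Finset G)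
    (hS : Subgroup.closure (S : Set G) = ⊤) (a b : G) :
    wordLength S (a * b) ≤ wordLength S a + wordLength S b := by
  obtain ⟨l1, h1, m1, p1⟩ := wordLength_spec S hS a
  obtain ⟨l2, h2, m2, p2⟩ := wordLength_spec S hS b
  have := wordLength_le S (l1 ++ l2) (by
    intro x hx; rcases List.mem_append.mp hx with h | h
    · exact m1 x h
    · exact m2 x h)
  simpa [p1, p2, h1, h2] using this

/-- **Švarc–Milnor lemma, quasi-isometry part.**
If a group `G` acts by isometries on a nonempty proper geodesic metric space `X`,
properly discontinuously and cocompactly, and `S` is a finite generating set of `G`,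
then for any base point `x₀` the orbit map `g ↦ g • x₀` is a quasi-isometry from
`G`, with the word metric of `S`, to `X`. -/
theorem svarc_milnor_quasiIsometry
    {G : Type*} [Group G] {X : Type*} [MetricSpace X] [Nonempty X] [ProperSpace X]
    [MulAction G X]
    -- `X` is geodesic
    (hgeo : ∀ x y : X, ∃ γ : ℝ → X, γ 0 = x ∧ γ (dist x y) = y ∧
      ∀ s ∈ Set.Icc (0 : ℝ) (dist x y), ∀ t ∈ Set.Icc (0 : ℝ) (dist x y),
        dist (γ s) (γ t) = |s - t|)
    -- the action is by isometries
    (hiso : ∀ (g : G) (x y : X), dist (g • x) (g • y) = dist x y)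
    -- the action is properly discontinuous
    (hpd : ∀ K : Set X, IsCompact K → {g : G | (g • K ∩ K).Nonempty}.Finite)
    -- the action is cocompact
    (hcc : ∃ K : Set X, IsCompact K ∧ ⋃ g : G, g • K = Set.univ)
    -- `S` is a finite generating set of `G`
    (S : Finset G) (hS : Subgroup.closure (S : Set G) = ⊤)
    (x₀ : X) :
    ∃ L : ℝ, 1 ≤ L ∧
      (∀ g h : G,
        (1 / L) * dist (g • x₀) (h • x₀) - L ≤ (wordLength S (g⁻¹ * h) : ℝ) ∧
        (wordLength S (g⁻¹ * h) : ℝ) ≤ L * dist (g • x₀) (h • x₀) + L) ∧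
      (∀ x : X, ∃ g : G, dist x (g • x₀) ≤ L) := by
  classical
  obtain ⟨K, hK, hKcov⟩ := hcc
  -- translate of K containing x₀, radius R
  have hx₀ : x₀ ∈ ⋃ g : G, g • K := hKcov ▸ Set.mem_univ x₀
  obtain ⟨g₀, hg₀⟩ := Set.mem_iUnion.mp hx₀
  have hisom : ∀ g : G, Isometry (fun x : X => g • x) := fun g =>
    Isometry.of_dist_eq (fun x y => hiso g x y)
  have hg₀K : IsCompact (g₀ • K) := hK.image (hisom g₀).continuous
  obtain ⟨R, hR⟩ := (Metric.isBounded_iff_subset_closedBall x₀).mp hg₀K.isBounded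
  set R' : ℝ := max R 1 with hR'def
  have hR'1 : (1:ℝ) ≤ R' := le_max_right _ _
  have hR'0 : (0:ℝ) ≤ R' := by linarith
  -- coverage: orbit is R'-dense
  have hcov : ∀ x : X, ∃ g : G, dist x (g • x₀) ≤ R' := by
    intro x
    have hx : x ∈ ⋃ g : G, g • K := hKcov ▸ Set.mem_univ x
    obtain ⟨g, hgx⟩ := Set.mem_iUnion.mp hx
    obtain ⟨k, hk, rfl⟩ := hgx
    refine ⟨g * g₀⁻¹, ?_⟩
    have h1 : g₀ • k ∈ Metric.closedBall x₀ R := hR (Set.smul_mem_smul_set hk)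
    have h2 : dist (g • k) ((g * g₀⁻¹) • x₀) = dist (g₀ • k) x₀ := by
      have h := hiso (g * g₀⁻¹) (g₀ • k) x₀
      rw [smul_smul, mul_assoc, inv_mul_cancel, mul_one] at h
      exact h
    rw [h2]
    exact le_trans (Metric.mem_closedBall.mp h1) (le_max_left _ _)
  -- dist between orbit points equals dist at identity
  have hdist : ∀ g h : G, dist (g • x₀) (h • x₀) = dist x₀ ((g⁻¹ * h) • x₀) := by
    intro g h
    have := hiso g⁻¹ (g • x₀) (h • x₀)
    rw [smul_smul, smul_smul, inv_mul_cancel, one_smul] at this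
    exact this.symm
  -- the finite set T of short elements
  set D : ℝ := 2 * R' + 1 with hDdef
  have hD0 : (0:ℝ) ≤ D := by linarith
  set T : Set G := {h : G | dist x₀ (h • x₀) ≤ D} with hT
  have hTfin : T.Finite := by
    apply Set.Finite.subset (hpd (Metric.closedBall x₀ D) (isCompact_closedBall x₀ D))
    intro h hh
    refine ⟨h • x₀, ?_, ?_⟩
    · exact Set.smul_mem_smul_set (Metric.mem_closedBall.mpr (by simpa using hD0))
    · exact Metric.mem_closedBall.mpr (by rw [dist_comm]; exact hh)
  set M : ℕ := hTfin.toFinset.sup (wordLength S) with hM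
  have hMle : ∀ h ∈ T, wordLength S h ≤ M := fun h hh =>
    Finset.le_sup (hTfin.mem_toFinset.mpr hh)
  -- key induction: word length upper bound
  have key : ∀ n : ℕ, ∀ k : G, dist x₀ (k • x₀) ≤ n + R' → wordLength S k ≤ M * (n + 1) := by
    intro n
    induction n with
    | zero =>
      intro k hk
      have : k ∈ T := by simp only [hT, Set.mem_setOf_eq]; push_cast at hk; linarith
      simpa using hMle k this
    | succ n ih =>
      intro k hk
      set d : ℝ := dist x₀ (k • x₀) with hd
      by_cases hcase : d ≤ 1 + R'
      · have : k ∈ T := by simp only [hT, Set.mem_setOf_eq]; rw [← hd]; linarith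
        calc wordLength S k ≤ M := hMle k this
          _ ≤ M * (n + 1 + 1) := Nat.le_mul_of_pos_right M (by omega)
      · push_neg at hcase
        obtain ⟨γ, hγ0, hγ1, hγ⟩ := hgeo x₀ (k • x₀)
        set p : X := γ (d - 1 - R') with hp
        have hmemt : d - 1 - R' ∈ Set.Icc (0:ℝ) d := ⟨by linarith, by linarith⟩
        have hmem0 : (0:ℝ) ∈ Set.Icc (0:ℝ) d := ⟨le_refl _, by linarith⟩
        have hmemd : d ∈ Set.Icc (0:ℝ) d := ⟨by linarith, le_refl _⟩
        have hdistp : dist x₀ p = d - 1 - R' := by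
          have := hγ 0 hmem0 (d - 1 - R') hmemt
          rw [hγ0] at this
          rw [hp, this, abs_of_nonpos (by linarith)]; ring
        have hdistpk : dist p (k • x₀) = 1 + R' := by
          have := hγ (d - 1 - R') hmemt d hmemd
          rw [hγ1] at this
          rw [hp, this, abs_of_nonpos (by linarith)]; ring
        obtain ⟨g₁, hg₁⟩ := hcov p
        have h1 : dist x₀ (g₁ • x₀) ≤ n + R' := by
          have := dist_triangle x₀ p (g₁ • x₀)
          have hkn : d ≤ (n:ℝ) + 1 + R' := by push_cast at hk ⊢; linarith
          linarith
        have h2 : g₁⁻¹ * k ∈ T := by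
          simp only [hT, Set.mem_setOf_eq]
          have := hdist g₁ k
          have htri := dist_triangle (g₁ • x₀) p (k • x₀)
          rw [dist_comm (g₁ • x₀) p] at htri
          rw [← this]
          linarith
        calc wordLength S k = wordLength S (g₁ * (g₁⁻¹ * k)) := by group
          _ ≤ wordLength S g₁ + wordLength S (g₁⁻¹ * k) := wordLength_mul_le S hS _ _
          _ ≤ M * (n + 1) + M := Nat.add_le_add (ih g₁ h1) (hMle _ h2)
          _ = M * (n + 1 + 1) := by ring
  -- constant C for the lower bound
  set Sfin : Finset G := insert (1:G) S with hSfin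
  set C : ℝ := Sfin.sup' (Finset.insert_nonempty _ _) (fun s => dist x₀ (s • x₀)) with hC
  have hC0 : (0:ℝ) ≤ C := by
    have h := Finset.le_sup' (fun s : G => dist x₀ (s • x₀)) (Finset.mem_insert_self (1:G) S)
    have h0 : dist x₀ ((1:G) • x₀) = 0 := by simp
    rw [hC]
    linarith [h, h0]
  have hCb : ∀ a : G, (a ∈ S ∨ a⁻¹ ∈ S) → dist x₀ (a • x₀) ≤ C := by
    intro a ha
    rcases ha with h | h
    · rw [hC]; exact Finset.le_sup' (fun s : G => dist x₀ (s • x₀)) (Finset.mem_insert_of_mem h)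
    · have heq : dist x₀ (a • x₀) = dist x₀ (a⁻¹ • x₀) := by
        have := hiso a⁻¹ x₀ (a • x₀)
        rw [smul_smul, inv_mul_cancel, one_smul] at this
        rw [← this, dist_comm]
      rw [heq, hC]
      exact Finset.le_sup' (fun s : G => dist x₀ (s • x₀)) (Finset.mem_insert_of_mem h)
  have hlistbd : ∀ l : List G, (∀ a ∈ l, a ∈ S ∨ a⁻¹ ∈ S) →
      dist x₀ (l.prod • x₀) ≤ C * l.length := by
    intro l
    induction l with
    | nil => intro _; simp
    | cons a l ih =>
      intro hl
      have h1 : dist x₀ (a • x₀) ≤ C := hCb a (hl a List.mem_cons_self)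
      have h2 : dist x₀ (l.prod • x₀) ≤ C * l.length :=
        ih (fun b hb => hl b (List.mem_cons_of_mem a hb))
      have h3 : dist (a • x₀) ((a :: l).prod • x₀) = dist x₀ (l.prod • x₀) := by
        rw [List.prod_cons, ← smul_smul]
        exact hiso a x₀ (l.prod • x₀)
      have := dist_triangle x₀ (a • x₀) ((a :: l).prod • x₀)
      rw [h3] at this
      simp only [List.length_cons]
      push_cast
      linarith
  -- the constant L
  have hM0 : (0:ℝ) ≤ (M:ℝ) := Nat.cast_nonneg _
  refine ⟨1 + C + R' + 2 * M, by linarith, ?_, ?_⟩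
  · intro g h
    set k : G := g⁻¹ * h with hk
    set d : ℝ := dist (g • x₀) (h • x₀) with hd
    have hdk : d = dist x₀ (k • x₀) := hdist g h
    have hd0 : (0:ℝ) ≤ d := dist_nonneg
    set L : ℝ := 1 + C + R' + 2 * M with hL
    have hL1 : (1:ℝ) ≤ L := by rw [hL]; linarith
    have hL0 : (0:ℝ) < L := by linarith
    constructor
    · -- lower bound
      obtain ⟨l, hlen, hmem, hprod⟩ := wordLength_spec S hS k
      have := hlistbd l hmem
      rw [hprod, hlen] at this
      have hdC : d ≤ C * (wordLength S k) := by rw [hdk]; exact this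
      have hwl0 : (0:ℝ) ≤ (wordLength S k : ℝ) := Nat.cast_nonneg _
      have hCL : C ≤ L := by rw [hL]; linarith
      have hinv : (0:ℝ) ≤ 1 / L := div_nonneg zero_le_one hL0.le
      have h1 : (1/L) * d ≤ (1/L) * (C * (wordLength S k : ℝ)) :=
        mul_le_mul_of_nonneg_left hdC hinv
      have h2 : C * (wordLength S k : ℝ) ≤ L * (wordLength S k : ℝ) :=
        mul_le_mul_of_nonneg_right hCL hwl0
      have h3 : (1/L) * (L * (wordLength S k : ℝ)) = (wordLength S k : ℝ) := by
        field_simp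
      have h4 : (1/L) * (C * (wordLength S k : ℝ)) ≤ (1/L) * (L * (wordLength S k : ℝ)) :=
        mul_le_mul_of_nonneg_left h2 hinv
      linarith
    · -- upper bound
      have hceil : d ≤ (⌈d⌉₊ : ℝ) + R' := by
        have := Nat.le_ceil d
        linarith
      have := key ⌈d⌉₊ k (by rw [← hdk]; exact hceil)
      have hcast : (wordLength S k : ℝ) ≤ (M : ℝ) * ((⌈d⌉₊ : ℝ) + 1) := by
        exact_mod_cast this
      have hceil2 : (⌈d⌉₊ : ℝ) ≤ d + 1 := by
        have := Nat.ceil_lt_add_one hd0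
        linarith
      have hM0 : (0:ℝ) ≤ (M:ℝ) := Nat.cast_nonneg _
      have hfin : (wordLength S k : ℝ) ≤ (M:ℝ) * d + 2 * M := by nlinarith
      have hML : (M:ℝ) * d ≤ L * d := mul_le_mul_of_nonneg_right (by rw [hL]; linarith) hd0
      have : (2:ℝ) * M ≤ L := by rw [hL]; linarith
      linarith
  · intro x
    obtain ⟨g, hg⟩ := hcov x
    exact ⟨g, by linarith⟩
end

section
/- Let G be an abelian group acting faithfully by isometries on a metric space X (d(g • x, g • y) = d(x, y) for all g, x, y, and the only element acting as the identity on X is 1). Suppose that every closed ball in X contains only finitely many points, and that the action has only finitely many orbits. Then for every point v ∈ X, the stabilizer G_v = {g ∈ G : g • v = v} is finite. -/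
/-- If an abelian group `G` acts faithfully by isometries on a metric space `X`
whose closed balls are all finite, with only finitely many orbits, then every
point stabilizer is finite. -/
theorem stabilizer_finite_of_abelian_faithful_isometric
    {G : Type*} [CommGroup G] {X : Type*} [MetricSpace X] [MulAction G X]
    -- the action is by isometries
    (hiso : ∀ (g : G) (x y : X), dist (g • x) (g • y) = dist x y)
    -- the action is faithful
    (hfaith : ∀ g : G, (∀ x : X, g • x = x) → g = 1)
    -- every closed ball in `X` is finite
    (hball : ∀ (x : X) (r : ℝ), (Metric.closedBall x r).Finite)
    -- there are only finitely many orbits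
    (horb : Finite (MulAction.orbitRel.Quotient G X)) :
    ∀ v : X, {g : G | g • v = v}.Finite := by
  intro v
  -- each orbit representative is moved by the stabilizer within a finite ball
  haveI : ∀ q : MulAction.orbitRel.Quotient G X,
      Finite (Metric.closedBall v (dist q.out v)) :=
    fun q => (hball v _).to_subtype
  rw [← Set.finite_coe_iff]
  have hmem : ∀ (g : {g : G | g • v = v}) (q : MulAction.orbitRel.Quotient G X),
      (g : G) • q.out ∈ Metric.closedBall v (dist q.out v) := by
    intro g q
    have hg : (g : G) • v = v := g.2
    simp only [Metric.mem_closedBall]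
    calc dist ((g : G) • q.out) v = dist ((g : G) • q.out) ((g : G) • v) := by rw [hg]
      _ = dist q.out v := hiso _ _ _
      _ ≤ dist q.out v := le_refl _
  apply Finite.of_injective (f := fun (g : {g : G | g • v = v}) =>
    fun q : MulAction.orbitRel.Quotient G X =>
      (⟨(g : G) • q.out, hmem g q⟩ : Metric.closedBall v (dist q.out v)))
  intro g g' h
  -- from equality of the functions, g'⁻¹ * g fixes every orbit representative
  have hq : ∀ q : MulAction.orbitRel.Quotient G X, (g : G) • q.out = (g' : G) • q.out := by
    intro q
    have := congrFun h q
    exact congrArg Subtype.val this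
  have hk : ∀ x : X, ((g' : G)⁻¹ * (g : G)) • x = x := by
    intro x
    set q : MulAction.orbitRel.Quotient G X := ⟦x⟧
    have hrel : (MulAction.orbitRel G X).r q.out x := Quotient.mk_out x
    obtain ⟨h, hh⟩ := hrel
    -- hh : h • x = q.out
    have : ((g' : G)⁻¹ * (g : G)) • q.out = q.out := by
      rw [mul_smul, hq q, ← mul_smul, inv_mul_cancel, one_smul]
    rw [← hh] at this
    have hcomm : ((g' : G)⁻¹ * (g : G)) • (h : G) • x = (h : G) • ((g' : G)⁻¹ * (g : G)) • x := by
      rw [smul_smul, smul_smul, mul_comm]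
    rw [hcomm] at this
    exact smul_left_cancel _ this
  have : (g' : G)⁻¹ * (g : G) = 1 := hfaith _ hk
  have : (g : G) = (g' : G) := by
    have := mul_eq_one_iff_eq_inv.mp this
    simpa using this.symm
  exact Subtype.ext this
end
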